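/- If A ⊆ ℕ is a D-set, then for every α > 0 and every 0 < γ < 1 the set g_{α,γ}(A) = {⌊nα + γ⌋ : n ∈ A} is a D-set. -/
import Mathlib


open Set Filter Topology

attribute [local instance] Ultrafilter.add

/-- The nonhomogeneous spectrum function `g_{α,γ}(n) = ⌊nα + γ⌋`. -/
noncomputable def gFun (α γ : ℝ) (n : ℕ) : ℕ := (⌊(n : ℝ) * α + γ⌋).toNat

/-- The image `g_{α,γ}(A) = {⌊nα + γ⌋ : n ∈ A}` of a set `A ⊆ ℕ` under the spectrum map. -/
noncomputable def gImage (α γ : ℝ) (A : Set ℕ) : Set ℕ := gFun α γ '' A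

/-- A Furstenberg family: a nonempty collection of nonempty subsets of ℕ (the positive
integers), hereditary upwards. -/
def IsFurstenbergFamily (F : Set (Set ℕ)) : Prop :=
  F.Nonempty ∧ (∀ A ∈ F, A.Nonempty) ∧ ∀ A B : Set ℕ, A ∈ F → A ⊆ B → B ∈ F

/-- Translation `+` invariance of a family. -/
def TranslationInvariant (F : Set (Set ℕ)) : Prop :=
  ∀ n : ℕ, ∀ A ∈ F, (fun m => n + m) '' A ∈ F

/-- The Ramsey property of a family. -/
def HasRamseyProperty (F : Set (Set ℕ)) : Prop :=
  ∀ A B : Set ℕ, A ∪ B ∈ F → A ∈ F ∨ B ∈ F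

/-- `N((x,y), U×U) = {n ∈ ℕ : Tⁿx ∈ U and Tⁿy ∈ U}` (ℕ being the positive integers). -/
def retTimes2 {X : Type*} (T : X → X) (x y : X) (U : Set X) : Set ℕ :=
  {n : ℕ | 0 < n ∧ T^[n] x ∈ U ∧ T^[n] y ∈ U}

/-- `N(x, U) = {n ∈ ℕ : Tⁿx ∈ U}` (ℕ being the positive integers). -/
def retTimes1 {X : Type*} (T : X → X) (x : X) (U : Set X) : Set ℕ :=
  {n : ℕ | 0 < n ∧ T^[n] x ∈ U}

/-- `x` is `F`-strongly proximal to `y`: for every neighborhood `U` of `y`,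
`N((x,y),U×U) ∈ F`. -/
def StronglyProximal {X : Type*} [TopologicalSpace X] (F : Set (Set ℕ))
    (T : X → X) (x y : X) : Prop :=
  ∀ U ∈ nhds y, retTimes2 T x y U ∈ F

/-- `A` is an essential `F`-set: witnessed by a dynamical system (compact metric space with a
continuous self-map), a pair of points `x` `F`-strongly proximal to `y`, and a neighborhood
`U` of `y` with `N((x,y),U×U) ⊆ A`. -/
def IsEssentialSet (F : Set (Set ℕ)) (A : Set ℕ) : Prop :=
  ∃ (X : Type) (_ : MetricSpace X) (_ : CompactSpace X) (T : X → X),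
    Continuous T ∧ ∃ x y : X, StronglyProximal F T x y ∧
      ∃ U ∈ nhds y, retTimes2 T x y U ⊆ A

/-- The return-time set of the pair `((x,γ),(y,γ))` to the neighborhood `U × (γ-ε, γ+ε)`
in the suspension `(Y, F_{α⁻¹})`, expressed on the base:
`{n : F_{α⁻¹}ⁿ(x,γ) ∈ U × (γ-ε,γ+ε) and F_{α⁻¹}ⁿ(y,γ) ∈ U × (γ-ε,γ+ε)}`, where
`F_{α⁻¹}ⁿ(x,t) = (T^{⌊n/α+t⌋}x, n/α+t-⌊n/α+t⌋)`. -/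
noncomputable def suspRet {X : Type*} (T : X → X) (x y : X) (U : Set X)
    (α γ ε : ℝ) : Set ℕ :=
  {n : ℕ | 0 < n ∧ T^[(⌊(n : ℝ) / α + γ⌋).toNat] x ∈ U ∧
    T^[(⌊(n : ℝ) / α + γ⌋).toNat] y ∈ U ∧
    γ - ε < (n : ℝ) / α + γ - ⌊(n : ℝ) / α + γ⌋ ∧
    (n : ℝ) / α + γ - ⌊(n : ℝ) / α + γ⌋ < γ + ε}

/-- The pair `(x,y)` has the `F`-suspension-proximality property at level `γ` for the
suspension `(Y, F_{α⁻¹})` of `(X,T)`: for every neighborhood `U` of `y` and every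
`0 < ε < min{γ, 1-γ}`, the corresponding return-time set in the suspension belongs to `F`
(i.e. `(x,γ)` is `F`-strongly proximal to `(y,γ)` in `(Y, F_{α⁻¹})`). -/
def SuspensionProximal {X : Type*} [TopologicalSpace X] (F : Set (Set ℕ))
    (T : X → X) (x y : X) (α γ : ℝ) : Prop :=
  ∀ U ∈ nhds y, ∀ ε : ℝ, 0 < ε → ε < min γ (1 - γ) → suspRet T x y U α γ ε ∈ F

/-- `A ⊆ ℕ` is an IP-set. -/
def IsIPSet (A : Set ℕ) : Prop :=
  ∃ p : ℕ → ℕ, (∀ n, 0 < p n) ∧ ∀ s : Finset ℕ, s.Nonempty → ∑ n ∈ s, p n ∈ A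

/-- `A ⊆ ℕ` is an AP-set: it contains arbitrarily long arithmetic progressions. -/
def IsAPSet (A : Set ℕ) : Prop :=
  ∀ m : ℕ, ∃ a b : ℕ, 0 < a ∧ 0 < b ∧ ∀ k < m, a + k * b ∈ A

/-- `A ⊆ ℕ` is a J-set. -/
def IsJSet (A : Set ℕ) : Prop :=
  ∀ (m : ℕ) (p : Fin m → ℕ → ℕ), (∀ i n, 0 < p i n) →
    ∃ r : ℕ, 0 < r ∧ ∃ s : Finset ℕ, s.Nonempty ∧ ∀ i : Fin m, r + ∑ n ∈ s, p i n ∈ A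

/-- `A ⊆ ℕ` is piecewise syndetic: for some `ℓ`, the union `⋃_{i=0}^{ℓ} (A−i)` contains
arbitrarily long intervals of consecutive integers. -/
def IsPiecewiseSyndetic (A : Set ℕ) : Prop :=
  ∃ l : ℕ, ∀ m : ℕ, ∃ n : ℕ, 0 < n ∧ ∀ k, n ≤ k → k ≤ n + m → ∃ i ≤ l, k + i ∈ A

/-- The upper density `d*(A) = limsup_{n→∞} |A ∩ [1,n]| / n`. -/
noncomputable def upperDensity (A : Set ℕ) : ℝ :=
  Filter.limsup (fun n : ℕ => ((A ∩ Set.Icc 1 n).ncard : ℝ) / n) Filter.atTop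

/-- The upper Banach density
`BD*(A) = limsup_{(n−m)→∞} |A ∩ [m,n]| / (n−m+1) = limsup_{L→∞} sup_m |A ∩ [m,m+L]| / (L+1)`. -/
noncomputable def upperBanachDensity (A : Set ℕ) : ℝ :=
  Filter.limsup (fun L : ℕ =>
    ⨆ m : ℕ, ((A ∩ Set.Icc m (m + L)).ncard : ℝ) / (L + 1)) Filter.atTop

/-- `A ⊆ ℕ` is a C-set: a member of an idempotent ultrafilter all of whose members are
J-sets. -/
def IsCSet (A : Set ℕ) : Prop :=
  ∃ p : Ultrafilter ℕ, p + p = p ∧ (∀ B ∈ p, IsJSet B) ∧ A ∈ p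

/-- `A ⊆ ℕ` is a D-set: a member of an idempotent ultrafilter all of whose members have
positive upper Banach density. -/
def IsDSet (A : Set ℕ) : Prop :=
  ∃ p : Ultrafilter ℕ, p + p = p ∧ (∀ B ∈ p, 0 < upperBanachDensity B) ∧ A ∈ p

/-- `A ⊆ ℕ` is a quasi-central set: a member of an idempotent ultrafilter all of whose
members are piecewise syndetic. -/
def IsQuasiCentralSet (A : Set ℕ) : Prop :=
  ∃ p : Ultrafilter ℕ, p + p = p ∧ (∀ B ∈ p, IsPiecewiseSyndetic B) ∧ A ∈ p

/-- The dual family `ess*(F)` of the family of essential `F`-sets. -/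
def essDual (F : Set (Set ℕ)) : Set (Set ℕ) :=
  {B : Set ℕ | ∀ A : Set ℕ, IsEssentialSet F A → (B ∩ A).Nonempty}
lemma gFun_eq (α γ : ℝ) (n : ℕ) : gFun α γ n = ⌊(n : ℝ) * α + γ⌋₊ := Int.floor_toNat _

/-- Key lemma: for an idempotent ultrafilter `p`, the multiples `n·α` are `p`-often
within `ε` of an integer. -/
lemma idem_fract (p : Ultrafilter ℕ) (hp : p + p = p) (α : ℝ) {ε : ℝ} (hε : 0 < ε) :
    {n : ℕ | ∃ k : ℤ, |(n : ℝ) * α - k| < ε} ∈ p := by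
  classical
  set g : ℕ → ℕ := fun n => ⌊Int.fract ((n : ℝ) * α) / ε⌋₊ with hg
  -- find a cell of the partition in p
  have hcover : (Set.univ : Set ℕ) = ⋃ j ∈ (Finset.range (⌊1/ε⌋₊ + 1) : Set ℕ), {n | g n = j} := by
    ext n
    simp only [Set.mem_univ, Set.mem_iUnion, Set.mem_setOf_eq, true_iff, Finset.coe_range,
      Set.mem_Iio]
    refine ⟨g n, ?_, rfl⟩
    have h1 : g n ≤ ⌊1/ε⌋₊ := by
      apply Nat.floor_le_floor
      gcongr
      exact (Int.fract_lt_one _).le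
    omega
  have hex : ∃ j ∈ (Finset.range (⌊1/ε⌋₊ + 1) : Set ℕ), {n | g n = j} ∈ p := by
    rw [← Ultrafilter.finite_biUnion_mem_iff (Finset.finite_toSet _), ← hcover]
    exact Filter.univ_mem
  obtain ⟨j, -, hj⟩ := hex
  -- same cell means close fractional parts
  have hclose : ∀ a b : ℝ, ⌊Int.fract a / ε⌋₊ = ⌊Int.fract b / ε⌋₊ →
      |Int.fract a - Int.fract b| < ε := by
    intro a b h
    have ha0 : (0:ℝ) ≤ Int.fract a / ε := div_nonneg (Int.fract_nonneg _) hε.le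
    have hb0 : (0:ℝ) ≤ Int.fract b / ε := div_nonneg (Int.fract_nonneg _) hε.le
    have h1 : (⌊Int.fract a / ε⌋₊ : ℝ) ≤ Int.fract a / ε := Nat.floor_le ha0
    have h2 : Int.fract a / ε < ⌊Int.fract a / ε⌋₊ + 1 := Nat.lt_floor_add_one _
    have h3 : (⌊Int.fract b / ε⌋₊ : ℝ) ≤ Int.fract b / ε := Nat.floor_le hb0
    have h4 : Int.fract b / ε < ⌊Int.fract b / ε⌋₊ + 1 := Nat.lt_floor_add_one _
    rw [h] at h1 h2
    have h2' : Int.fract a < (⌊Int.fract b / ε⌋₊ + 1) * ε := by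
      rw [← div_lt_iff₀ hε]; exact h2
    have h4' : Int.fract b < (⌊Int.fract b / ε⌋₊ + 1) * ε := by
      rw [← div_lt_iff₀ hε]; exact h4
    have h1' : (⌊Int.fract b / ε⌋₊ : ℝ) * ε ≤ Int.fract a := by
      rw [← le_div_iff₀ hε]; exact h1
    have h3' : (⌊Int.fract b / ε⌋₊ : ℝ) * ε ≤ Int.fract b := by
      rw [← le_div_iff₀ hε]; exact h3
    rw [abs_sub_lt_iff]
    constructor <;> nlinarith
  -- use idempotence
  have h2 : ∀ᶠ m in (p : Filter ℕ), ∀ᶠ n in (p : Filter ℕ), g (m + n) = j := by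
    have : {n | g n = j} ∈ p + p := by rw [hp]; exact hj
    exact this
  have hj' : ∀ᶠ n in (p : Filter ℕ), g n = j := hj
  have h3 : ∀ᶠ m in (p : Filter ℕ), g m = j ∧ ∀ᶠ n in (p : Filter ℕ), g (m + n) = j :=
    hj'.and h2
  obtain ⟨m, hm1, hm2⟩ := h3.exists
  refine Filter.mem_of_superset hm2 ?_
  intro n hn
  refine ⟨⌊((m + n : ℕ) : ℝ) * α⌋ - ⌊(m : ℝ) * α⌋, ?_⟩
  have hn' : g (m + n) = j := hn
  have key := hclose (((m + n : ℕ) : ℝ) * α) ((m : ℝ) * α) (hn'.trans hm1.symm)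
  have e1 : Int.fract (((m + n : ℕ) : ℝ) * α) = ((m+n:ℕ):ℝ)*α - ⌊((m+n:ℕ):ℝ)*α⌋ := rfl
  have e2 : Int.fract ((m : ℝ) * α) = (m:ℝ)*α - ⌊(m:ℝ)*α⌋ := rfl
  rw [e1, e2] at key
  have : ((m+n:ℕ):ℝ) = (m:ℝ) + n := by push_cast; ring
  rw [this] at key
  push_cast
  convert key using 2
  ring

lemma floor_close (γ : ℝ) (hγ0 : 0 < γ) (hγ1 : γ < 1) {x : ℝ} {k : ℤ}
    (h : |x - k| < (min γ (1 - γ)) / 2) : ⌊x + γ⌋ = k := by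
  rw [abs_sub_lt_iff] at h
  have h1 := min_le_left γ (1 - γ)
  have h2 := min_le_right γ (1 - γ)
  rw [Int.floor_eq_iff]
  push_cast
  constructor <;> linarith [h.1, h.2]

lemma gFun_add (α γ : ℝ) (hα : 0 < α) (hγ0 : 0 < γ) (hγ1 : γ < 1) {m n : ℕ} {k l : ℤ}
    (hm : |(m : ℝ) * α - k| < (min γ (1 - γ)) / 4) (hn : |(n : ℝ) * α - l| < (min γ (1 - γ)) / 4) :
    gFun α γ m + gFun α γ n = gFun α γ (m + n) := by
  have hmin : 0 < min γ (1 - γ) := lt_min hγ0 (by linarith)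
  have e1 : ⌊(m : ℝ) * α + γ⌋ = k := floor_close γ hγ0 hγ1 (by linarith [abs_nonneg ((m:ℝ)*α - k)])
  have e2 : ⌊(n : ℝ) * α + γ⌋ = l := floor_close γ hγ0 hγ1 (by linarith [abs_nonneg ((n:ℝ)*α - l)])
  have e3 : ⌊((m + n : ℕ) : ℝ) * α + γ⌋ = k + l := by
    apply floor_close γ hγ0 hγ1
    push_cast
    rw [abs_sub_lt_iff] at hm hn ⊢
    push_cast
    constructor <;> [nlinarith [hm.1, hn.1]; nlinarith [hm.2, hn.2]]
  have hk : 0 ≤ k := by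
    rw [← e1]; exact Int.floor_nonneg.2 (by positivity)
  have hl : 0 ≤ l := by
    rw [← e2]; exact Int.floor_nonneg.2 (by positivity)
  unfold gFun
  rw [e1, e2, e3, Int.toNat_add hk hl]

lemma gFun_nonneg_arg (α γ : ℝ) (hα : 0 < α) (hγ0 : 0 < γ) (n : ℕ) : 0 ≤ (n : ℝ) * α + γ := by
  positivity

lemma gFun_fiber (α γ : ℝ) (hα : 0 < α) (hγ0 : 0 < γ) (s : Finset ℕ) (k : ℕ) :
    (s.filter (fun n => gFun α γ n = k)).card ≤ ⌊1/α⌋₊ + 1 := by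
  classical
  set t := s.filter (fun n => gFun α γ n = k) with ht
  rcases t.eq_empty_or_nonempty with h | h
  · simp [h]
  · set n₀ := t.min' h with hn₀
    have hsub : t ⊆ Finset.Icc n₀ (n₀ + ⌊1/α⌋₊) := by
      intro n hn
      have h0 : n₀ ≤ n := t.min'_le n hn
      have hmem : gFun α γ n = k := (Finset.mem_filter.mp hn).2
      have hmem0 : gFun α γ n₀ = k := (Finset.mem_filter.mp (t.min'_mem h)).2
      rw [gFun_eq] at hmem hmem0
      have e1 : ((n₀ : ℝ) * α + γ) < k + 1 := by
        rw [← hmem0]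
        exact Nat.lt_floor_add_one _
      have e2 : (k : ℝ) ≤ (n : ℝ) * α + γ := by
        rw [← hmem]
        exact Nat.floor_le (gFun_nonneg_arg α γ hα hγ0 n)
      -- wrong direction; we need n bounded above: use k ≤ n₀-side and n-side < k+1
      have e1' : ((n : ℝ) * α + γ) < k + 1 := by
        rw [← hmem]
        exact Nat.lt_floor_add_one _
      have e2' : (k : ℝ) ≤ (n₀ : ℝ) * α + γ := by
        rw [← hmem0]
        exact Nat.floor_le (gFun_nonneg_arg α γ hα hγ0 n₀)
      have hd : ((n - n₀ : ℕ) : ℝ) * α < 1 := by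
        have : ((n - n₀ : ℕ) : ℝ) = (n : ℝ) - n₀ := by
          push_cast [h0]; ring
        rw [this]; nlinarith
      have : ((n - n₀ : ℕ) : ℝ) ≤ 1 / α := by
        rw [le_div_iff₀ hα]; exact hd.le
      have := Nat.le_floor this
      rw [Finset.mem_Icc]
      omega
    calc t.card ≤ (Finset.Icc n₀ (n₀ + ⌊1/α⌋₊)).card := Finset.card_le_card hsub
      _ = ⌊1/α⌋₊ + 1 := by rw [Nat.card_Icc]; omega

lemma gFun_mono (α γ : ℝ) (hα : 0 < α) : Monotone (gFun α γ) := by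
  intro m n hmn
  rw [gFun_eq, gFun_eq]
  apply Nat.floor_le_floor
  have : (m : ℝ) ≤ n := Nat.cast_le.mpr hmn
  nlinarith

lemma gFun_add_le (α γ : ℝ) (hα : 0 < α) (hγ0 : 0 < γ) (hγ1 : γ < 1) (m L : ℕ) :
    gFun α γ (m + L) ≤ gFun α γ m + (⌊(L : ℝ) * α⌋₊ + 1) := by
  rw [gFun_eq, gFun_eq]
  have h1 : ((m + L : ℕ) : ℝ) * α + γ < (⌊(m : ℝ) * α + γ⌋₊ + (⌊(L : ℝ) * α⌋₊ + 1) + 1 : ℕ) := by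
    have a1 : (m : ℝ) * α + γ < ⌊(m : ℝ) * α + γ⌋₊ + 1 := Nat.lt_floor_add_one _
    have a2 : (L : ℝ) * α < ⌊(L : ℝ) * α⌋₊ + 1 := Nat.lt_floor_add_one _
    push_cast
    nlinarith [a1, a2]
  have := Nat.floor_lt (gFun_nonneg_arg α γ hα hγ0 (m + L)) |>.mpr h1
  omega

lemma count_le (α γ : ℝ) (hα : 0 < α) (hγ0 : 0 < γ) (hγ1 : γ < 1) (B : Set ℕ) (m L : ℕ) :
    (gFun α γ ⁻¹' B ∩ Set.Icc m (m + L)).ncard ≤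
      (⌊1/α⌋₊ + 1) * (B ∩ Set.Icc (gFun α γ m) (gFun α γ m + (⌊(L : ℝ) * α⌋₊ + 1))).ncard := by
  classical
  set f := gFun α γ
  set K := ⌊(L : ℝ) * α⌋₊ + 1 with hK
  set s := (Finset.Icc m (m + L)).filter (fun n => f n ∈ B) with hs
  set t := (Finset.Icc (f m) (f m + K)).filter (fun n => n ∈ B) with htt
  have eqC : gFun α γ ⁻¹' B ∩ Set.Icc m (m + L) = ↑s := by
    ext n; simp [hs, f]; tauto
  have eqB : B ∩ Set.Icc (f m) (f m + K) = ↑t := by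
    ext n; simp [htt]; tauto
  rw [eqC, eqB, Set.ncard_coe_finset, Set.ncard_coe_finset]
  have h1 : s.card ≤ (⌊1/α⌋₊ + 1) * (s.image f).card :=
    Finset.card_le_mul_card_image s _ (fun a _ => gFun_fiber α γ hα hγ0 s a)
  have h2 : s.image f ⊆ t := by
    intro b hb
    obtain ⟨n, hn, rfl⟩ := Finset.mem_image.mp hb
    rw [hs, Finset.mem_filter, Finset.mem_Icc] at hn
    rw [htt, Finset.mem_filter, Finset.mem_Icc]
    refine ⟨⟨gFun_mono α γ hα hn.1.1, ?_⟩, hn.2⟩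
    calc f n ≤ f (m + L) := gFun_mono α γ hα hn.1.2
      _ ≤ f m + K := gFun_add_le α γ hα hγ0 hγ1 m L
  calc s.card ≤ (⌊1/α⌋₊ + 1) * (s.image f).card := h1
    _ ≤ (⌊1/α⌋₊ + 1) * t.card := by
        exact Nat.mul_le_mul_left _ (Finset.card_le_card h2)

lemma ncard_inter_Icc_le (B : Set ℕ) (m L : ℕ) : (B ∩ Set.Icc m (m + L)).ncard ≤ L + 1 := by
  classical
  have : B ∩ Set.Icc m (m + L) ⊆ ↑(Finset.Icc m (m + L)) := by
    intro x hx; simpa using hx.2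
  calc (B ∩ Set.Icc m (m + L)).ncard ≤ (↑(Finset.Icc m (m + L)) : Set ℕ).ncard :=
        Set.ncard_le_ncard this (Finset.finite_toSet _)
    _ = L + 1 := by rw [Set.ncard_coe_finset, Nat.card_Icc]; omega


lemma density_transfer (α γ : ℝ) (hα : 0 < α) (hγ0 : 0 < γ) (hγ1 : γ < 1) (B : Set ℕ)
    (hC : 0 < upperBanachDensity (gFun α γ ⁻¹' B)) : 0 < upperBanachDensity B := by
  classical
  set C := gFun α γ ⁻¹' B with hCdef
  set c' : ℝ := ((⌊1/α⌋₊ : ℝ) + 1) * (α + 2) with hc'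
  have hc'pos : 0 < c' := by positivity
  set K : ℕ → ℕ := fun L => ⌊(L : ℝ) * α⌋₊ + 1 with hKdef
  set sB : ℕ → ℝ := fun L => ⨆ m : ℕ, ((B ∩ Set.Icc m (m + L)).ncard : ℝ) / (L + 1) with hsB
  set sC : ℕ → ℝ := fun L => ⨆ m : ℕ, ((C ∩ Set.Icc m (m + L)).ncard : ℝ) / (L + 1) with hsC
  have hbdd : ∀ (D : Set ℕ) (L : ℕ),
      BddAbove (Set.range fun m : ℕ => ((D ∩ Set.Icc m (m + L)).ncard : ℝ) / (L + 1)) := by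
    intro D L
    refine ⟨1, ?_⟩
    rintro x ⟨m, rfl⟩
    rw [div_le_one (by positivity)]
    have := ncard_inter_Icc_le D m L
    push_cast
    exact_mod_cast Nat.cast_le.mpr this |>.trans (by push_cast; linarith)
  have hnonneg : ∀ (D : Set ℕ) (L : ℕ),
      0 ≤ ⨆ m : ℕ, ((D ∩ Set.Icc m (m + L)).ncard : ℝ) / (L + 1) := by
    intro D L
    refine le_trans ?_ (le_ciSup (hbdd D L) 0)
    positivity
  have hle1 : ∀ (D : Set ℕ) (L : ℕ),
      (⨆ m : ℕ, ((D ∩ Set.Icc m (m + L)).ncard : ℝ) / (L + 1)) ≤ 1 := by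
    intro D L
    apply ciSup_le
    intro m
    rw [div_le_one (by positivity)]
    have := ncard_inter_Icc_le D m L
    exact_mod_cast Nat.cast_le.mpr this |>.trans (by push_cast; linarith)
  -- the key pointwise bound
  have key : ∀ L : ℕ, sC L ≤ c' * sB (K L) := by
    intro L
    apply ciSup_le
    intro m
    have h1 : ((C ∩ Set.Icc m (m + L)).ncard : ℝ) ≤
        ((⌊1/α⌋₊ : ℝ) + 1) *
          ((B ∩ Set.Icc (gFun α γ m) (gFun α γ m + K L)).ncard : ℝ) := by
      have := count_le α γ hα hγ0 hγ1 B m L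
      rw [hCdef]
      exact_mod_cast this
    have h2 : ((B ∩ Set.Icc (gFun α γ m) (gFun α γ m + K L)).ncard : ℝ) / ((K L : ℝ) + 1) ≤
        sB (K L) := le_ciSup (hbdd B (K L)) (gFun α γ m)
    have hKL : ((K L : ℝ) + 1) ≤ (α + 2) * ((L : ℝ) + 1) := by
      have h3 : (⌊(L : ℝ) * α⌋₊ : ℝ) ≤ (L : ℝ) * α := Nat.floor_le (by positivity)
      have hL0 : (0:ℝ) ≤ L := Nat.cast_nonneg L
      rw [hKdef]
      push_cast
      nlinarith
    have hKpos : (0:ℝ) < (K L : ℝ) + 1 := by positivity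
    have hLpos : (0:ℝ) < (L : ℝ) + 1 := by positivity
    rw [div_le_iff₀ hLpos]
    have h2' : ((B ∩ Set.Icc (gFun α γ m) (gFun α γ m + K L)).ncard : ℝ) ≤
        ((K L : ℝ) + 1) * sB (K L) := by
      rw [div_le_iff₀ hKpos] at h2
      linarith
    have hsBnn : 0 ≤ sB (K L) := hnonneg B (K L)
    have hcnn : (0:ℝ) ≤ (⌊1/α⌋₊ : ℝ) + 1 := by positivity
    calc ((C ∩ Set.Icc m (m + L)).ncard : ℝ)
        ≤ ((⌊1/α⌋₊ : ℝ) + 1) * (((K L : ℝ) + 1) * sB (K L)) := by nlinarith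
      _ ≤ ((⌊1/α⌋₊ : ℝ) + 1) * ((α + 2) * ((L : ℝ) + 1) * sB (K L)) :=
          mul_le_mul_of_nonneg_left (mul_le_mul_of_nonneg_right hKL hsBnn) hcnn
      _ = c' * sB (K L) * ((L : ℝ) + 1) := by rw [hc']; ring
  -- K tends to infinity
  have hKtend : Filter.Tendsto K Filter.atTop Filter.atTop := by
    have h0 : Filter.Tendsto (fun L : ℕ => ⌊(L : ℝ) * α⌋₊) Filter.atTop Filter.atTop :=
      tendsto_nat_floor_atTop.comp
        ((tendsto_natCast_atTop_atTop (R := ℝ)).atTop_mul_const hα)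
    exact Filter.tendsto_atTop_mono (fun L => Nat.le_succ _) h0
  -- frequently large sC
  set d : ℝ := upperBanachDensity C / 2 with hd
  have hdpos : 0 < d := by rw [hd]; linarith
  have hcob : Filter.IsCoboundedUnder (· ≤ ·) Filter.atTop sC := by
    apply Filter.IsBoundedUnder.isCoboundedUnder_le
    exact Filter.isBoundedUnder_of ⟨0, fun L => hnonneg C L⟩
  have hfreq : ∃ᶠ L in Filter.atTop, d < sC L := by
    apply Filter.frequently_lt_of_lt_limsup hcob
    rw [hd]
    have : upperBanachDensity C = Filter.limsup sC Filter.atTop := rfl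
    linarith [this ▸ hC]
  have hfreq2 : ∃ᶠ L in Filter.atTop, d / c' ≤ sB (K L) := by
    refine hfreq.mono ?_
    intro L hL
    rw [div_le_iff₀ hc'pos]
    have := key L
    nlinarith [hnonneg B (K L)]
  have hfreq3 : ∃ᶠ M in Filter.atTop, d / c' ≤ sB M := by
    have : ∃ᶠ M in Filter.map K Filter.atTop, d / c' ≤ sB M := by
      rwa [Filter.frequently_map]
    exact this.filter_mono hKtend
  have hbound : Filter.IsBoundedUnder (· ≤ ·) Filter.atTop sB :=
    Filter.isBoundedUnder_of ⟨1, fun L => hle1 B L⟩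
  have hfinal : d / c' ≤ Filter.limsup sB Filter.atTop :=
    Filter.le_limsup_of_frequently_le hfreq3 hbound
  have : upperBanachDensity B = Filter.limsup sB Filter.atTop := rfl
  rw [this]
  have : 0 < d / c' := by positivity
  linarith


/-- If `A ⊆ ℕ` is a D-set, then so is `g_{α,γ}(A)` for all `α > 0` and `0 < γ < 1`. -/
theorem dSet_spectra (A : Set ℕ) (hA : IsDSet A) (α γ : ℝ) (hα : 0 < α)
    (hγ0 : 0 < γ) (hγ1 : γ < 1) : IsDSet (gImage α γ A) := by
  unfold gImage
  obtain ⟨p, hpp, hpd, hAp⟩ := hA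
  set f := gFun α γ with hf
  set q : Ultrafilter ℕ := p.map f with hq
  have hmin4 : 0 < (min γ (1 - γ)) / 4 := by
    have : 0 < min γ (1 - γ) := lt_min hγ0 (by linarith)
    linarith
  have hE : {n : ℕ | ∃ k : ℤ, |(n : ℝ) * α - k| < (min γ (1 - γ)) / 4} ∈ p :=
    idem_fract p hpp α hmin4
  have main : ∀ s : Set ℕ, s ∈ q → s ∈ q + q := by
    intro s hs
    have hC : f ⁻¹' s ∈ p := Ultrafilter.mem_map.mp hs
    have h2 : ∀ᶠ m in (p : Filter ℕ), ∀ᶠ n in (p : Filter ℕ), m + n ∈ f ⁻¹' s := by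
      have h : f ⁻¹' s ∈ p + p := by rw [hpp]; exact hC
      exact h
    have goal_iff : ∀ᶠ a in (↑(q + q) : Filter ℕ), a ∈ s := by
      rw [Ultrafilter.eventually_add]
      simp only [hq, Ultrafilter.coe_map, Filter.eventually_map]
      filter_upwards [hE, h2] with m hmE hm2
      filter_upwards [hE, hm2] with n hnE hn2
      obtain ⟨k, hk⟩ := hmE
      obtain ⟨l, hl⟩ := hnE
      have hadd : gFun α γ m + gFun α γ n = gFun α γ (m + n) :=
        gFun_add α γ hα hγ0 hγ1 hk hl
      show f m + f n ∈ s
      rw [hf, hadd]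
      exact hn2
    exact goal_iff
  have hqq : q + q = q := by
    ext s
    constructor
    · intro hs
      by_contra hns
      have h1 : sᶜ ∈ q := Ultrafilter.compl_mem_iff_notMem.2 hns
      exact (Ultrafilter.compl_mem_iff_notMem.1 (main _ h1)) hs
    · exact main s
  refine ⟨q, hqq, ?_, ?_⟩
  · intro B hB
    have hCp : f ⁻¹' B ∈ p := Ultrafilter.mem_map.mp hB
    exact density_transfer α γ hα hγ0 hγ1 B (hpd _ hCp)
  · rw [hq, Ultrafilter.mem_map]
    exact Filter.mem_of_superset hAp (Set.subset_preimage_image f A)
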